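/- For any allocation O = (O_1, ..., O_n) of indivisible items, there exists a permutation σ of the agents such that the reassigned allocation (O_{σ(1)}, ..., O_{σ(n)}) is envy-freeable; that is, every allocation can be made envy-freeable by reassigning the bundles among the agents. -/

import Mathlib

open Finset

/-- The bundle of agent `i` under the assignment `f` of items to agents;
an assignment `f : Fin m → Fin n` encodes a complete allocation. -/
def bundle {n m : ℕ} (f : Fin m → Fin n) (i : Fin n) : Finset (Fin m) :=
  Finset.univ.filter fun o => f o = i

namespace EFaux

variable {n : ℕ}

noncomputable def dmax (w : Fin (n + 1) → Fin (n + 1) → ℝ) : ℕ → Fin (n + 1) → ℝ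
  | 0, _ => 0
  | k + 1, i =>
      max (dmax w k i) (Finset.univ.sup' Finset.univ_nonempty fun j => w i j + dmax w k j)

def pathSum (w : Fin (n + 1) → Fin (n + 1) → ℝ) (k : ℕ) (g : ℕ → Fin (n + 1)) : ℝ :=
  ∑ t ∈ Finset.range k, w (g t) (g (t + 1))

lemma dmax_nonneg (w : Fin (n + 1) → Fin (n + 1) → ℝ) : ∀ k i, 0 ≤ dmax w k i
  | 0, _ => le_refl 0
  | k + 1, i => le_trans (dmax_nonneg w k i) (le_max_left _ _)

lemma dmax_mono (w : Fin (n + 1) → Fin (n + 1) → ℝ) (i : Fin (n + 1)) :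
    Monotone fun k => dmax w k i :=
  monotone_nat_of_le_succ fun k => le_max_left _ _

lemma dmax_bellman (w : Fin (n + 1) → Fin (n + 1) → ℝ) (k : ℕ) (i j : Fin (n + 1)) :
    w i j + dmax w k j ≤ dmax w (k + 1) i :=
  le_trans (Finset.le_sup' (fun j => w i j + dmax w k j) (mem_univ j)) (le_max_right _ _)

lemma pathSum_le_dmax (w : Fin (n + 1) → Fin (n + 1) → ℝ) :
    ∀ k (g : ℕ → Fin (n + 1)), pathSum w k g ≤ dmax w k (g 0) := by
  intro k
  induction k with
  | zero => intro g; simp [pathSum, dmax]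
  | succ k ih =>
      intro g
      have h1 : pathSum w (k + 1) g = w (g 0) (g 1) + pathSum w k (fun t => g (t + 1)) := by
        rw [pathSum, Finset.sum_range_succ' (fun t => w (g t) (g (t + 1))) k, pathSum]
        ring
      rw [h1]
      calc w (g 0) (g 1) + pathSum w k (fun t => g (t + 1))
          ≤ w (g 0) (g 1) + dmax w k (g 1) := by
            have := ih (fun t => g (t + 1)); simpa using by linarith [this]
        _ ≤ dmax w (k + 1) (g 0) := dmax_bellman w k (g 0) (g 1)

lemma dmax_le_pathSum (w : Fin (n + 1) → Fin (n + 1) → ℝ) (hww : ∀ i, w i i = 0) :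
    ∀ k (i : Fin (n + 1)), ∃ g : ℕ → Fin (n + 1), g 0 = i ∧ dmax w k i ≤ pathSum w k g := by
  intro k
  induction k with
  | zero => intro i; exact ⟨fun _ => i, rfl, by simp [pathSum, dmax]⟩
  | succ k ih =>
      intro i
      rcases max_cases (dmax w k i)
        (Finset.univ.sup' Finset.univ_nonempty fun j => w i j + dmax w k j) with
        ⟨heq, _⟩ | ⟨heq, _⟩
      · -- padding case
        obtain ⟨g, hg0, hg⟩ := ih i
        refine ⟨fun t => g (min t k), by simpa using hg0, ?_⟩
        have hps : pathSum w (k + 1) (fun t => g (min t k)) = pathSum w k g := by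
          rw [pathSum, Finset.sum_range_succ, pathSum]
          have h2 : (min (k+1) k) = k := by omega
          have h3 : (min k k) = k := by omega
          rw [h2, h3, hww]
          rw [add_zero]
          apply Finset.sum_congr rfl
          intro t ht
          simp only [Finset.mem_range] at ht
          rw [min_eq_left (by omega), min_eq_left (by omega)]
        rw [hps, dmax, heq]
        exact hg
      · -- extension case
        obtain ⟨j, -, hj⟩ := Finset.exists_mem_eq_sup' Finset.univ_nonempty
          (fun j => w i j + dmax w k j)
        obtain ⟨g, hg0, hg⟩ := ih j
        refine ⟨fun t => if t = 0 then i else g (t - 1), by simp, ?_⟩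
        have hps : pathSum w (k + 1) (fun t => if t = 0 then i else g (t - 1))
            = w i j + pathSum w k g := by
          rw [pathSum, Finset.sum_range_succ'
            (fun t => w (if t = 0 then i else g (t - 1)) (if t + 1 = 0 then i else g (t + 1 - 1)))]
          simp only [Nat.succ_ne_zero, if_false, if_pos rfl, Nat.add_sub_cancel]
          rw [hg0, add_comm, pathSum]
          simp
        rw [hps, dmax, heq, hj]
        exact add_le_add_right hg (w i j)


lemma cycle_nonpos (w : Fin (n + 1) → Fin (n + 1) → ℝ) (hww : ∀ i, w i i = 0)
    (hcyc : ∀ τ : Equiv.Perm (Fin (n + 1)), ∑ x, w x (τ x) ≤ 0)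
    (c : ℕ) (e : Fin (c + 1) → Fin (n + 1)) (he : Function.Injective e) :
    ∑ t : Fin (c + 1), w (e t) (e (t + 1)) ≤ 0 := by
  set emb : Fin (c + 1) ↪ Fin (n + 1) := ⟨e, he⟩ with hemb
  set τ := (finRotate (c + 1)).viaFintypeEmbedding emb with hτ
  have h2 : ∑ x : Fin (n + 1), w x (τ x) = ∑ t : Fin (c + 1), w (e t) (e (t + 1)) := by
    rw [← Finset.sum_subset (Finset.subset_univ (Finset.univ.map emb)) ?_]
    · rw [Finset.sum_map]
      refine Finset.sum_congr rfl fun t _ => ?_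
      have : τ (emb t) = emb (finRotate (c + 1) t) :=
        Equiv.Perm.viaFintypeEmbedding_apply_image (finRotate (c + 1)) emb t
      rw [this, finRotate_succ_apply]
      rfl
    · intro x _ hx
      have hxr : x ∉ Set.range emb := by
        intro ⟨t, ht⟩
        exact hx (Finset.mem_map.2 ⟨t, Finset.mem_univ t, ht⟩)
      rw [hτ, Equiv.Perm.viaFintypeEmbedding_apply_notMem_range _ _ hxr]
      exact hww x
  rw [← h2]
  exact hcyc τ


lemma key (w : Fin (n + 1) → Fin (n + 1) → ℝ) (hww : ∀ i, w i i = 0)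
    (hcyc : ∀ τ : Equiv.Perm (Fin (n + 1)), ∑ x, w x (τ x) ≤ 0) :
    ∀ k (g : ℕ → Fin (n + 1)), pathSum w k g ≤ dmax w (n + 1) (g 0) := by
  intro k
  induction k using Nat.strong_induction_on with
  | _ k IH =>
  intro g
  by_cases hk : k ≤ n + 1
  · exact le_trans (pathSum_le_dmax w k g) (dmax_mono w (g 0) hk)
  · push_neg at hk
    classical
    obtain ⟨x, y, hxy, hgxy⟩ := Fintype.exists_ne_map_eq_of_card_lt
      (fun t : Fin (n + 2) => g t) (by simp)
    have hex : ∃ b₀, (∃ a, a < b₀ ∧ g a = g b₀) ∧ b₀ ≤ n + 1 := by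
      have hne : (x : ℕ) ≠ (y : ℕ) := fun h => hxy (Fin.val_injective h)
      rcases Nat.lt_or_ge (x : ℕ) (y : ℕ) with h | h
      · exact ⟨y, ⟨x, h, hgxy⟩, by omega⟩
      · exact ⟨x, ⟨y, by omega, hgxy.symm⟩, by omega⟩
    obtain ⟨b₀, hPb₀, hb₀le⟩ := hex
    have hP : ∃ b, ∃ a, a < b ∧ g a = g b := ⟨b₀, hPb₀⟩
    set b := Nat.find hP with hbdef
    obtain ⟨a, hab, hgab⟩ := Nat.find_spec hP
    have hble : b ≤ n + 1 := le_trans (Nat.find_min' hP hPb₀) hb₀le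
    have hbmin : ∀ b' < b, ¬ ∃ a, a < b' ∧ g a = g b' := fun b' h => Nat.find_min hP h
    set c := b - a with hcdef
    have hc1 : 1 ≤ c := by omega
    set c' := c - 1 with hc'def
    have hcc : c = c' + 1 := by omega
    -- the simple cycle
    set e : Fin (c' + 1) → Fin (n + 1) := fun t => g (a + t) with hedef
    have hestep : ∀ t1 t2 : Fin (c' + 1), t1 < t2 → e t1 ≠ e t2 := by
      intro t1 t2 hlt heq
      have ht2 : (t2 : ℕ) < c' + 1 := t2.isLt
      exact hbmin (a + (t2 : ℕ)) (by omega)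
        ⟨a + (t1 : ℕ), by exact_mod_cast (by omega : a + (t1:ℕ) < a + (t2:ℕ)), heq⟩
    have he : Function.Injective e := by
      intro t1 t2 h
      rcases lt_trichotomy t1 t2 with hlt | heq | hgt
      · exact absurd h (hestep t1 t2 hlt)
      · exact heq
      · exact absurd h.symm (hestep t2 t1 hgt)
    have hcw : (∑ t ∈ Finset.Ico a b, w (g t) (g (t + 1)))
        = ∑ t : Fin (c' + 1), w (e t) (e (t + 1)) := by
      rw [Finset.sum_Ico_eq_sum_range]
      have hba : b - a = c' + 1 := by omega
      rw [hba, ← Fin.sum_univ_eq_sum_range (fun t => w (g (a + t)) (g (a + t + 1)))]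
      refine Finset.sum_congr rfl fun t _ => ?_
      have h1 : e t = g (a + (t : ℕ)) := rfl
      have h2 : e (t + 1) = g (a + ((t + 1 : Fin (c' + 1)) : ℕ)) := rfl
      rw [h1, h2]
      by_cases ht : (t : ℕ) < c'
      · have hv : ((t + 1 : Fin (c' + 1)) : ℕ) = (t : ℕ) + 1 := by
          rw [Fin.val_add_one, if_neg]
          intro heq; rw [heq] at ht; simp [Fin.last] at ht
        rw [hv]
        exact congrArg (fun s => w (g (a + (t : ℕ))) (g s)) (by omega)
      · have hteq : (t : ℕ) = c' := by have := t.isLt; omega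
        have hv : ((t + 1 : Fin (c' + 1)) : ℕ) = 0 := by
          rw [Fin.val_add_one, if_pos (Fin.ext hteq)]
        rw [hv, hteq, add_zero]
        have h3 : a + c' + 1 = b := by omega
        rw [h3, ← hgab]
    -- cycle weight is nonpositive
    have hcyc0 : (∑ t ∈ Finset.Ico a b, w (g t) (g (t + 1))) ≤ 0 := by
      rw [hcw]; exact cycle_nonpos w hww hcyc c' e he
    -- the shortened path
    set g' : ℕ → Fin (n + 1) := fun t => if t < a then g t else g (t + c) with hg'def
    have hg'0 : g' 0 = g 0 := by
      by_cases h : 0 < a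
      · simp only [hg'def, if_pos h]
      · have ha0 : a = 0 := by omega
        simp only [hg'def, if_neg (by omega : ¬ (0 < a)), zero_add]
        rw [show c = b by omega, ← hgab, ha0]
    have hsplit : pathSum w k g
        = pathSum w (k - c) g' + ∑ t ∈ Finset.Ico a b, w (g t) (g (t + 1)) := by
      have h1 : pathSum w k g = (∑ t ∈ Finset.Ico 0 a, w (g t) (g (t + 1)))
          + (∑ t ∈ Finset.Ico a b, w (g t) (g (t + 1)))
          + (∑ t ∈ Finset.Ico b k, w (g t) (g (t + 1))) := by
        rw [pathSum, Finset.range_eq_Ico,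
          ← Finset.sum_Ico_consecutive (fun t => w (g t) (g (t + 1)))
            (Nat.zero_le b) (by omega : b ≤ k),
          ← Finset.sum_Ico_consecutive (fun t => w (g t) (g (t + 1)))
            (Nat.zero_le a) (by omega : a ≤ b)]
      have h2 : pathSum w (k - c) g' = (∑ t ∈ Finset.Ico 0 a, w (g t) (g (t + 1)))
          + (∑ t ∈ Finset.Ico b k, w (g t) (g (t + 1))) := by
        rw [pathSum, Finset.range_eq_Ico,
          ← Finset.sum_Ico_consecutive (fun t => w (g' t) (g' (t + 1)))
            (Nat.zero_le a) (by omega : a ≤ k - c)]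
        congr 1
        · refine Finset.sum_congr rfl fun t ht => ?_
          obtain ⟨-, hta⟩ := Finset.mem_Ico.1 ht
          have e1 : g' t = g t := by simp only [hg'def, if_pos hta]
          have e2 : g' (t + 1) = g (t + 1) := by
            by_cases h : t + 1 < a
            · simp only [hg'def, if_pos h]
            · have hta1 : t + 1 = a := by omega
              simp only [hg'def, if_neg (by omega : ¬ (t + 1 < a))]
              rw [show t + 1 + c = b by omega, ← hgab, hta1]
          rw [e1, e2]
        · rw [Finset.sum_Ico_eq_sum_range, Finset.sum_Ico_eq_sum_range,
            show k - c - a = k - b by omega]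
          refine Finset.sum_congr rfl fun t ht => ?_
          simp only [hg'def, if_neg (by omega : ¬ (a + t < a)),
            if_neg (by omega : ¬ (a + t + 1 < a))]
          rw [show a + t + c = b + t by omega, show a + t + 1 + c = b + t + 1 by omega]
      rw [h1, h2]; ring
    have hrec : pathSum w (k - c) g' ≤ dmax w (n + 1) (g' 0) := IH (k - c) (by omega) g'
    rw [hg'0] at hrec
    linarith


lemma exists_payments (w : Fin (n + 1) → Fin (n + 1) → ℝ) (hww : ∀ i, w i i = 0)
    (hcyc : ∀ τ : Equiv.Perm (Fin (n + 1)), ∑ x, w x (τ x) ≤ 0) :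
    ∃ p : Fin (n + 1) → ℝ, (∀ i, 0 ≤ p i) ∧ ∀ i j, w i j + p j ≤ p i := by
  refine ⟨fun i => dmax w (n + 1) i, fun i => dmax_nonneg w (n + 1) i, fun i j => ?_⟩
  have h1 : w i j + dmax w (n + 1) j ≤ dmax w (n + 2) i := dmax_bellman w (n + 1) i j
  obtain ⟨g, hg0, hg⟩ := dmax_le_pathSum w hww (n + 2) i
  have h2 : pathSum w (n + 2) g ≤ dmax w (n + 1) (g 0) := key w hww hcyc (n + 2) g
  rw [hg0] at h2
  exact le_trans h1 (le_trans hg h2)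

end EFaux


/-- For any allocation of indivisible items, there exists a permutation `σ` of
the agents such that the reassigned allocation `(O_{σ(1)}, …, O_{σ(n)})` is envy-freeable,
i.e., admits non-negative subsidy payments making it envy-free. -/
theorem exists_envy_freeable_reassignment (n m : ℕ)
    (u : Fin n → Finset (Fin m) → ℝ) (hu0 : ∀ i, u i ∅ = 0)
    (f : Fin m → Fin n) :
    ∃ σ : Equiv.Perm (Fin n), ∃ p : Fin n → ℝ, (∀ i, 0 ≤ p i) ∧
      ∀ i j : Fin n,
        u i (bundle f (σ i)) + p i ≥ u i (bundle f (σ j)) + p j := by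
  cases n with
  | zero => exact ⟨1, fun _ => 0, fun i => i.elim0, fun i => i.elim0⟩
  | succ n =>
    obtain ⟨σ, hσ⟩ := Finite.exists_max
      (fun σ : Equiv.Perm (Fin (n + 1)) => ∑ x, u x (bundle f (σ x)))
    set w : Fin (n + 1) → Fin (n + 1) → ℝ :=
      fun i j => u i (bundle f (σ j)) - u i (bundle f (σ i)) with hw
    have hww : ∀ i, w i i = 0 := fun i => sub_self _
    have hcyc : ∀ τ : Equiv.Perm (Fin (n + 1)), ∑ x, w x (τ x) ≤ 0 := by
      intro τ
      have h1 : ∑ x, w x (τ x)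
          = (∑ x, u x (bundle f ((σ * τ) x))) - ∑ x, u x (bundle f (σ x)) := by
        rw [← Finset.sum_sub_distrib]
        exact Finset.sum_congr rfl fun x _ => by rw [hw, Equiv.Perm.mul_apply]
      rw [h1]
      linarith [hσ (σ * τ)]
    obtain ⟨p, hp0, hp⟩ := EFaux.exists_payments w hww hcyc
    refine ⟨σ, p, hp0, fun i j => ?_⟩
    have := hp i j
    simp only [hw] at this
    linarith
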